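/- Let ε ∈ (1,2] and T ≥ 1. Let z_t > 0, w_t > 0 and h_t ≥ 0 for t = 1,…,T, and ĥ_t > 0 for t = 2,…,T+1, with h_t ≤ ĥ_t for 2 ≤ t ≤ T. Let β_1 > 0 and define β_t = β_{t−1} + (z_{t−1} β_{t−1}^{1−ε} + w_{t−1} β_{t−1}^{−2})/ĥ_t for t = 2,…,T; set β_0 = 0. Then ∑_{t=1}^T ((β_t − β_{t−1}) h_t + z_t β_t^{1−ε} + w_t β_t^{−2}) ≤ 4·[ ∑_{t=1}^T z_t (∑_{s=1}^t z_s/ĥ_{s+1})^{(1−ε)/ε} + ∑_{t=1}^T w_t (∑_{s=1}^t w_s/ĥ_{s+1})^{−2/3} ] + 8·( (max_{t≤T} z_t)·β_1^{1−ε} + (max_{t≤T} w_t)·β_1^{−2} ) + β_1 h_1. -/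

import Mathlib

open Finset

lemma bern_aux {q y c x : ℝ} (hq : 1 ≤ q) (hy : 0 < y) (hc : 0 ≤ c)
    (hx : y + c * y ^ (1 - q) ≤ x) : y ^ q + c ≤ x ^ q := by
  set s : ℝ := c * y ^ (-q) with hs
  have hs0 : 0 ≤ s := mul_nonneg hc (Real.rpow_nonneg hy.le _)
  have hyq : 0 < y ^ q := Real.rpow_pos_of_pos hy q
  have hmul : y ^ (1 - q) = y * y ^ (-q) := by
    rw [sub_eq_add_neg, Real.rpow_add hy, Real.rpow_one]
  have h1 : y * (1 + s) = y + c * y ^ (1 - q) := by rw [hmul, hs]; ring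
  have step1 : (y * (1 + s)) ^ q ≤ x ^ q :=
    Real.rpow_le_rpow (by positivity) (h1 ▸ (h1 ▸ hx)) (by linarith)
  have step2 : (y * (1 + s)) ^ q = y ^ q * (1 + s) ^ q :=
    Real.mul_rpow hy.le (by linarith)
  have step3 : 1 + q * s ≤ (1 + s) ^ q :=
    one_add_mul_self_le_rpow_one_add (by linarith) hq
  have step4 : y ^ q * (1 + q * s) ≤ y ^ q * (1 + s) ^ q :=
    mul_le_mul_of_nonneg_left step3 hyq.le
  have hone : y ^ q * y ^ (-q) = 1 := by
    rw [← Real.rpow_add hy]; simp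
  have key : y ^ q * (1 + q * s) = y ^ q + q * c := by
    rw [hs]; linear_combination q * c * hone
  have hqc : c ≤ q * c := by nlinarith
  calc y ^ q + c ≤ y ^ q + q * c := by linarith
    _ = y ^ q * (1 + q * s) := key.symm
    _ ≤ y ^ q * (1 + s) ^ q := step4
    _ = (y * (1 + s)) ^ q := step2.symm
    _ ≤ x ^ q := step1

lemma charge_aux (p b Z : ℝ) (hp : 0 < p) (hb : 0 < b) (hZ0 : 0 ≤ Z)
    (T : ℕ) (z S : ℕ → ℝ)
    (hz : ∀ t ∈ Finset.Icc 1 T, 0 < z t)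
    (hzZ : ∀ t ∈ Finset.Icc 1 T, z t ≤ Z)
    (hS0 : 0 ≤ S 0)
    (hSmono : ∀ t ∈ Finset.Icc 1 T, S (t - 1) ≤ S t)
    (hSpos : ∀ t ∈ Finset.Icc 1 T, 0 < S t) :
    ∀ d m, 1 ≤ m → m + d = T + 1 →
      ∑ t ∈ Finset.Icc m T, z t * (b + S (t - 1)) ^ (-p)
        ≤ 2 * ∑ t ∈ Finset.Icc m T, z t * S t ^ (-p)
          + 2 * Z * (b + S (m - 1)) ^ (-p) := by
  have hSnn : ∀ t ∈ Finset.Icc 1 T, 0 ≤ S (t - 1) := by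
    intro t ht
    obtain ⟨h1, h2⟩ := Finset.mem_Icc.mp ht
    rcases Nat.lt_or_ge t 2 with h | h
    · have ht1 : t = 1 := by omega
      simpa [ht1] using hS0
    · exact (hSpos (t - 1) (Finset.mem_Icc.mpr ⟨by omega, by omega⟩)).le
  have hBpos : ∀ t ∈ Finset.Icc 1 T, 0 < b + S (t - 1) := fun t ht => by
    linarith [hSnn t ht]
  intro d
  induction d with
  | zero =>
    intro m hm hmd
    have hmT : m = T + 1 := by omega
    subst hmT
    rw [Finset.Icc_eq_empty (by omega)]
    simp only [Finset.sum_empty, Nat.add_sub_cancel, mul_zero, zero_add]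
    have hbS : 0 ≤ b + S T := by
      rcases Nat.eq_zero_or_pos T with h | h
      · subst h; linarith
      · linarith [hSpos T (Finset.mem_Icc.mpr ⟨h, le_refl T⟩)]
    positivity
  | succ d ih =>
    intro m hm hmd
    have hmT : m ≤ T := by omega
    have hmem : m ∈ Finset.Icc 1 T := Finset.mem_Icc.mpr ⟨hm, hmT⟩
    have hErase : (Finset.Icc m T).erase m = Finset.Icc (m + 1) T := by
      rw [Finset.Icc_erase_left, ← Finset.Icc_add_one_left_eq_Ioc]
    have hsplit : ∀ f : ℕ → ℝ,
        ∑ t ∈ Finset.Icc m T, f t = f m + ∑ t ∈ Finset.Icc (m + 1) T, f t := by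
      intro f
      rw [← Finset.add_sum_erase _ f (Finset.mem_Icc.mpr ⟨le_refl m, hmT⟩), hErase]
    have hih := ih (m + 1) (by omega) (by omega)
    simp only [Nat.add_sub_cancel] at hih
    have hX : 0 < b + S (m - 1) := hBpos m hmem
    have hSm : 0 < S m := hSpos m hmem
    have hXm : b + S (m - 1) ≤ b + S m := by linarith [hSmono m hmem]
    have hXSm : 0 < b + S m := lt_of_lt_of_le hX hXm
    have hzm := hz m hmem
    have hzZm := hzZ m hmem
    have hSmnn : 0 ≤ z m * S m ^ (-p) :=
      mul_nonneg hzm.le (Real.rpow_nonneg hSm.le _)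
    have k2 : ((2 : ℝ) ^ ((1 : ℝ) / p) * (b + S (m - 1))) ^ (-p)
        = 2⁻¹ * (b + S (m - 1)) ^ (-p) := by
      rw [Real.mul_rpow (by positivity) hX.le,
        ← Real.rpow_mul (by norm_num : (0 : ℝ) ≤ 2),
        show (1 : ℝ) / p * (-p) = -1 by field_simp,
        Real.rpow_neg_one]
    rw [hsplit (fun t => z t * (b + S (t - 1)) ^ (-p)),
      hsplit (fun t => z t * S t ^ (-p))]
    by_cases hc : S m ≤ 2 ^ ((1 : ℝ) / p) * (b + S (m - 1))
    · have k1 : ((2 : ℝ) ^ ((1 : ℝ) / p) * (b + S (m - 1))) ^ (-p) ≤ S m ^ (-p) :=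
        Real.rpow_le_rpow_of_nonpos hSm hc (by linarith)
      rw [k2] at k1
      have k3 : z m * (b + S (m - 1)) ^ (-p) ≤ 2 * (z m * S m ^ (-p)) := by
        have := mul_le_mul_of_nonneg_left k1 hzm.le
        nlinarith [Real.rpow_nonneg hX.le (-p)]
      have k4 : (b + S m) ^ (-p) ≤ (b + S (m - 1)) ^ (-p) :=
        Real.rpow_le_rpow_of_nonpos hX hXm (by linarith)
      have k5 : 2 * Z * (b + S m) ^ (-p) ≤ 2 * Z * (b + S (m - 1)) ^ (-p) := by
        nlinarith
      linarith
    · push_neg at hc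
      have k5 : (b + S m) ^ (-p) ≤ ((2 : ℝ) ^ ((1 : ℝ) / p) * (b + S (m - 1))) ^ (-p) :=
        Real.rpow_le_rpow_of_nonpos (by positivity) (by linarith) (by linarith)
      rw [k2] at k5
      have k6 : z m * (b + S (m - 1)) ^ (-p) ≤ Z * (b + S (m - 1)) ^ (-p) :=
        mul_le_mul_of_nonneg_right hzZm (Real.rpow_nonneg hX.le _)
      have k7 : 2 * Z * (b + S m) ^ (-p) ≤ Z * (b + S (m - 1)) ^ (-p) := by
        nlinarith
      linarith

set_option maxHeartbeats 1000000 in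
/-- second part of Lemma 5: the explicit HT-SPM learning rate.
With `β₀ = 0`, `β₁ > 0`, and
`β_t = β_{t−1} + (z_{t−1} β_{t−1}^{1−ε} + w_{t−1} β_{t−1}^{−2})/ĥ_t` for `t = 2,…,T`,
`F(β; z, w, h) ≤ 4 G(z, w, ĥ_{2:T+1}) + 8(z_max β₁^{1−ε} + w_max β₁^{−2}) + β₁ h₁`. -/
theorem explicit_htspm_bound
    (ε : ℝ) (hε1 : 1 < ε) (hε2 : ε ≤ 2)
    (T : ℕ) (hT : 1 ≤ T)
    (z w hh h β : ℕ → ℝ)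
    (hz : ∀ t ∈ Finset.Icc 1 T, 0 < z t)
    (hw : ∀ t ∈ Finset.Icc 1 T, 0 < w t)
    (hhh : ∀ t ∈ Finset.Icc 2 (T + 1), 0 < hh t)
    (hh0 : ∀ t ∈ Finset.Icc 1 T, 0 ≤ h t)
    (hhle : ∀ t ∈ Finset.Icc 2 T, h t ≤ hh t)
    (hβ0 : β 0 = 0) (hβ1 : 0 < β 1)
    (hβrec : ∀ t ∈ Finset.Icc 2 T,
      β t = β (t - 1) +
        (z (t - 1) * β (t - 1) ^ (1 - ε) + w (t - 1) * β (t - 1) ^ (-2 : ℝ)) / hh t) :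
    ∑ t ∈ Finset.Icc 1 T,
        ((β t - β (t - 1)) * h t + z t * β t ^ (1 - ε) + w t * β t ^ (-2 : ℝ))
      ≤ 4 * ((∑ t ∈ Finset.Icc 1 T,
            z t * (∑ s ∈ Finset.Icc 1 t, z s / hh (s + 1)) ^ ((1 - ε) / ε))
          + ∑ t ∈ Finset.Icc 1 T,
            w t * (∑ s ∈ Finset.Icc 1 t, w s / hh (s + 1)) ^ (-(2 : ℝ) / 3))
        + 8 * (((Finset.Icc 1 T).sup' (Finset.nonempty_Icc.mpr hT) z) * β 1 ^ (1 - ε)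
            + ((Finset.Icc 1 T).sup' (Finset.nonempty_Icc.mpr hT) w) * β 1 ^ (-2 : ℝ))
        + β 1 * h 1 := by
  have hε0 : 0 < ε := by linarith
  have hεne : ε ≠ 0 := ne_of_gt hε0
  have h1mem : (1 : ℕ) ∈ Finset.Icc 1 T := Finset.mem_Icc.mpr ⟨le_refl 1, hT⟩
  set Z := (Finset.Icc 1 T).sup' (Finset.nonempty_Icc.mpr hT) z with hZdef
  set W := (Finset.Icc 1 T).sup' (Finset.nonempty_Icc.mpr hT) w with hWdef
  have hZle : ∀ t ∈ Finset.Icc 1 T, z t ≤ Z := fun t ht => Finset.le_sup' z ht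
  have hWle : ∀ t ∈ Finset.Icc 1 T, w t ≤ W := fun t ht => Finset.le_sup' w ht
  have hZ0 : 0 < Z := lt_of_lt_of_le (hz 1 h1mem) (hZle 1 h1mem)
  have hW0 : 0 < W := lt_of_lt_of_le (hw 1 h1mem) (hWle 1 h1mem)
  -- positivity of β on [1, T]
  have hβpos : ∀ t, 1 ≤ t → t ≤ T → 0 < β t := by
    intro t ht
    induction t, ht using Nat.le_induction with
    | base => exact fun _ => hβ1
    | succ n hn ih =>
      intro hn1
      have hnT : n ≤ T := by omega
      have hβn : 0 < β n := ih hnT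
      have hrec := hβrec (n + 1) (Finset.mem_Icc.mpr ⟨by omega, hn1⟩)
      simp only [Nat.add_sub_cancel] at hrec
      have e1 : 0 < β n ^ (1 - ε) := Real.rpow_pos_of_pos hβn _
      have e2 : 0 < β n ^ (-2 : ℝ) := Real.rpow_pos_of_pos hβn _
      have hzn := hz n (Finset.mem_Icc.mpr ⟨hn, hnT⟩)
      have hwn := hw n (Finset.mem_Icc.mpr ⟨hn, hnT⟩)
      have hhn := hhh (n + 1) (Finset.mem_Icc.mpr ⟨by omega, by omega⟩)
      have hd : 0 < (z n * β n ^ (1 - ε) + w n * β n ^ (-2 : ℝ)) / hh (n + 1) :=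
        div_pos (by nlinarith) hhn
      rw [hrec]; linarith
  have hsumstep : ∀ (f : ℕ → ℝ) (n : ℕ), 1 ≤ n →
      ∑ s ∈ Finset.Icc 1 n, f s = (∑ s ∈ Finset.Icc 1 (n - 1), f s) + f n := by
    intro f n hn
    obtain ⟨k, rfl⟩ : ∃ k, n = k + 1 := ⟨n - 1, by omega⟩
    simp only [Nat.add_sub_cancel]
    exact Finset.sum_Icc_succ_top (by omega) f
  -- generic growth lemma
  have hgrow : ∀ (q : ℝ) (u : ℕ → ℝ), 1 ≤ q →
      (∀ s, 1 ≤ s → s ≤ T → 0 ≤ u s / hh (s + 1)) →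
      (∀ t, 2 ≤ t → t ≤ T →
        β (t - 1) + (u (t - 1) / hh t) * β (t - 1) ^ (1 - q) ≤ β t) →
      ∀ t, 1 ≤ t → t ≤ T →
        β 1 ^ q + ∑ s ∈ Finset.Icc 1 (t - 1), u s / hh (s + 1) ≤ β t ^ q := by
    intro q u hq hu hstep t ht
    induction t, ht using Nat.le_induction with
    | base => intro _; simp
    | succ n hn ih =>
      intro hn1
      have hnT : n ≤ T := by omega
      have ihn := ih hnT
      have hb := hstep (n + 1) (by omega) hn1
      simp only [Nat.add_sub_cancel] at hb ⊢
      have hbern := bern_aux hq (hβpos n hn hnT) (hu n hn hnT) hb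
      rw [hsumstep (fun s => u s / hh (s + 1)) n hn]
      linarith
  have huz : ∀ s, 1 ≤ s → s ≤ T → 0 ≤ z s / hh (s + 1) := by
    intro s h1 h2
    exact (div_pos (hz s (Finset.mem_Icc.mpr ⟨h1, h2⟩))
      (hhh (s + 1) (Finset.mem_Icc.mpr ⟨by omega, by omega⟩))).le
  have huw : ∀ s, 1 ≤ s → s ≤ T → 0 ≤ w s / hh (s + 1) := by
    intro s h1 h2
    exact (div_pos (hw s (Finset.mem_Icc.mpr ⟨h1, h2⟩))
      (hhh (s + 1) (Finset.mem_Icc.mpr ⟨by omega, by omega⟩))).le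
  have hstepz : ∀ t, 2 ≤ t → t ≤ T →
      β (t - 1) + (z (t - 1) / hh t) * β (t - 1) ^ (1 - ε) ≤ β t := by
    intro t h2 hT'
    have hrec := hβrec t (Finset.mem_Icc.mpr ⟨h2, hT'⟩)
    have hβt1 : 0 < β (t - 1) := hβpos (t - 1) (by omega) (by omega)
    have hwt := hw (t - 1) (Finset.mem_Icc.mpr ⟨by omega, by omega⟩)
    have hht := hhh t (Finset.mem_Icc.mpr ⟨h2, by omega⟩)
    have e2 : 0 < β (t - 1) ^ (-2 : ℝ) := Real.rpow_pos_of_pos hβt1 _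
    rw [hrec, add_div]
    have h3 : z (t - 1) / hh t * β (t - 1) ^ (1 - ε)
        = z (t - 1) * β (t - 1) ^ (1 - ε) / hh t := by ring
    have h4 : 0 < w (t - 1) * β (t - 1) ^ (-2 : ℝ) / hh t :=
      div_pos (mul_pos hwt e2) hht
    rw [h3]; linarith
  have hstepw : ∀ t, 2 ≤ t → t ≤ T →
      β (t - 1) + (w (t - 1) / hh t) * β (t - 1) ^ (1 - (3 : ℝ)) ≤ β t := by
    intro t h2 hT'
    have hrec := hβrec t (Finset.mem_Icc.mpr ⟨h2, hT'⟩)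
    have hβt1 : 0 < β (t - 1) := hβpos (t - 1) (by omega) (by omega)
    have hzt := hz (t - 1) (Finset.mem_Icc.mpr ⟨by omega, by omega⟩)
    have hht := hhh t (Finset.mem_Icc.mpr ⟨h2, by omega⟩)
    have e1 : 0 < β (t - 1) ^ (1 - ε) := Real.rpow_pos_of_pos hβt1 _
    rw [show (1 : ℝ) - 3 = -2 by norm_num, hrec, add_div]
    have h3 : w (t - 1) / hh t * β (t - 1) ^ (-2 : ℝ)
        = w (t - 1) * β (t - 1) ^ (-2 : ℝ) / hh t := by ring
    have h4 : 0 < z (t - 1) * β (t - 1) ^ (1 - ε) / hh t :=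
      div_pos (mul_pos hzt e1) hht
    rw [h3]; linarith
  have hgz := hgrow ε z hε1.le huz hstepz
  have hgw := hgrow 3 w (by norm_num) huw hstepw
  -- partial sums facts
  have hSznn : ∀ t : ℕ, t ≤ T → 0 ≤ ∑ s ∈ Finset.Icc 1 t, z s / hh (s + 1) := by
    intro t ht
    apply Finset.sum_nonneg
    intro i hi
    obtain ⟨hi1, hi2⟩ := Finset.mem_Icc.mp hi
    exact huz i hi1 (by omega)
  have hSwnn : ∀ t : ℕ, t ≤ T → 0 ≤ ∑ s ∈ Finset.Icc 1 t, w s / hh (s + 1) := by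
    intro t ht
    apply Finset.sum_nonneg
    intro i hi
    obtain ⟨hi1, hi2⟩ := Finset.mem_Icc.mp hi
    exact huw i hi1 (by omega)
  have hSzpos : ∀ t ∈ Finset.Icc 1 T, 0 < ∑ s ∈ Finset.Icc 1 t, z s / hh (s + 1) := by
    intro t ht
    obtain ⟨h1, h2⟩ := Finset.mem_Icc.mp ht
    apply Finset.sum_pos
    · intro i hi
      obtain ⟨hi1, hi2⟩ := Finset.mem_Icc.mp hi
      exact div_pos (hz i (Finset.mem_Icc.mpr ⟨hi1, by omega⟩))
        (hhh (i + 1) (Finset.mem_Icc.mpr ⟨by omega, by omega⟩))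
    · exact Finset.nonempty_Icc.mpr h1
  have hSwpos : ∀ t ∈ Finset.Icc 1 T, 0 < ∑ s ∈ Finset.Icc 1 t, w s / hh (s + 1) := by
    intro t ht
    obtain ⟨h1, h2⟩ := Finset.mem_Icc.mp ht
    apply Finset.sum_pos
    · intro i hi
      obtain ⟨hi1, hi2⟩ := Finset.mem_Icc.mp hi
      exact div_pos (hw i (Finset.mem_Icc.mpr ⟨hi1, by omega⟩))
        (hhh (i + 1) (Finset.mem_Icc.mpr ⟨by omega, by omega⟩))
    · exact Finset.nonempty_Icc.mpr h1
  have hSzmono : ∀ t ∈ Finset.Icc 1 T,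
      (∑ s ∈ Finset.Icc 1 (t - 1), z s / hh (s + 1)) ≤ ∑ s ∈ Finset.Icc 1 t, z s / hh (s + 1) := by
    intro t ht
    obtain ⟨h1, h2⟩ := Finset.mem_Icc.mp ht
    rw [hsumstep (fun s => z s / hh (s + 1)) t h1]
    linarith [huz t h1 h2]
  have hSwmono : ∀ t ∈ Finset.Icc 1 T,
      (∑ s ∈ Finset.Icc 1 (t - 1), w s / hh (s + 1)) ≤ ∑ s ∈ Finset.Icc 1 t, w s / hh (s + 1) := by
    intro t ht
    obtain ⟨h1, h2⟩ := Finset.mem_Icc.mp ht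
    rw [hsumstep (fun s => w s / hh (s + 1)) t h1]
    linarith [huw t h1 h2]
  -- apply the charging lemma for the z-part
  have hchargez := charge_aux ((ε - 1) / ε) (β 1 ^ ε) Z
      (div_pos (by linarith) hε0) (Real.rpow_pos_of_pos hβ1 ε) hZ0.le T z
      (fun t => ∑ s ∈ Finset.Icc 1 t, z s / hh (s + 1))
      hz hZle (by simp) hSzmono hSzpos T 1 (le_refl 1) (by omega)
  have hchargew := charge_aux ((2 : ℝ) / 3) (β 1 ^ (3 : ℝ)) W
      (by norm_num) (Real.rpow_pos_of_pos hβ1 _) hW0.le T w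
      (fun t => ∑ s ∈ Finset.Icc 1 t, w s / hh (s + 1))
      hw hWle (by simp) hSwmono hSwpos T 1 (le_refl 1) (by omega)
  have hexpz : -((ε - 1) / ε) = (1 - ε) / ε := by ring
  have hexpw : -((2 : ℝ) / 3) = -(2 : ℝ) / 3 := by norm_num
  simp only [hexpz] at hchargez
  simp only [hexpw] at hchargew
  have hS10z : (∑ s ∈ Finset.Icc 1 (1 - 1 : ℕ), z s / hh (s + 1)) = 0 := by
    rw [show Finset.Icc 1 (1 - 1 : ℕ) = ∅ from Finset.Icc_eq_empty (by omega)]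
    simp
  have hS10w : (∑ s ∈ Finset.Icc 1 (1 - 1 : ℕ), w s / hh (s + 1)) = 0 := by
    rw [show Finset.Icc 1 (1 - 1 : ℕ) = ∅ from Finset.Icc_eq_empty (by omega)]
    simp
  rw [hS10z, add_zero] at hchargez
  rw [hS10w, add_zero] at hchargew
  have hbz : (β 1 ^ ε) ^ ((1 - ε) / ε) = β 1 ^ (1 - ε) := by
    rw [← Real.rpow_mul hβ1.le]
    congr 1
    field_simp
  have hbw : (β 1 ^ (3 : ℝ)) ^ (-(2 : ℝ) / 3) = β 1 ^ (-2 : ℝ) := by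
    rw [← Real.rpow_mul hβ1.le]
    norm_num
  rw [hbz] at hchargez
  rw [hbw] at hchargew
  -- per-term bounds
  have hptz : ∑ t ∈ Finset.Icc 1 T, z t * β t ^ (1 - ε)
      ≤ ∑ t ∈ Finset.Icc 1 T,
          z t * (β 1 ^ ε + ∑ s ∈ Finset.Icc 1 (t - 1), z s / hh (s + 1)) ^ ((1 - ε) / ε) := by
    apply Finset.sum_le_sum
    intro t ht
    obtain ⟨h1, h2⟩ := Finset.mem_Icc.mp ht
    have hβt := hβpos t h1 h2
    have hgt := hgz t h1 h2
    have hbase : 0 < β 1 ^ ε + ∑ s ∈ Finset.Icc 1 (t - 1), z s / hh (s + 1) := by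
      have h5 := hSznn (t - 1) (by omega)
      have h6 := Real.rpow_pos_of_pos hβ1 ε
      linarith
    have hneg : (1 - ε) / ε ≤ 0 := by
      apply div_nonpos_of_nonpos_of_nonneg <;> linarith
    have key := Real.rpow_le_rpow_of_nonpos hbase hgt hneg
    have id1 : (β t ^ ε) ^ ((1 - ε) / ε) = β t ^ (1 - ε) := by
      rw [← Real.rpow_mul hβt.le]
      congr 1
      field_simp
    rw [id1] at key
    exact mul_le_mul_of_nonneg_left key (hz t ht).le
  have hptw : ∑ t ∈ Finset.Icc 1 T, w t * β t ^ (-2 : ℝ)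
      ≤ ∑ t ∈ Finset.Icc 1 T,
          w t * (β 1 ^ (3 : ℝ) + ∑ s ∈ Finset.Icc 1 (t - 1), w s / hh (s + 1)) ^ (-(2 : ℝ) / 3) := by
    apply Finset.sum_le_sum
    intro t ht
    obtain ⟨h1, h2⟩ := Finset.mem_Icc.mp ht
    have hβt := hβpos t h1 h2
    have hgt := hgw t h1 h2
    have hbase : 0 < β 1 ^ (3 : ℝ) + ∑ s ∈ Finset.Icc 1 (t - 1), w s / hh (s + 1) := by
      have h5 := hSwnn (t - 1) (by omega)
      have h6 := Real.rpow_pos_of_pos hβ1 (3 : ℝ)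
      linarith
    have hneg : -(2 : ℝ) / 3 ≤ 0 := by norm_num
    have key := Real.rpow_le_rpow_of_nonpos hbase hgt hneg
    have id1 : (β t ^ (3 : ℝ)) ^ (-(2 : ℝ) / 3) = β t ^ (-2 : ℝ) := by
      rw [← Real.rpow_mul hβt.le]
      norm_num
    rw [id1] at key
    exact mul_le_mul_of_nonneg_left key (hw t ht).le
  have hA : ∑ t ∈ Finset.Icc 1 T, z t * β t ^ (1 - ε)
      ≤ 2 * (∑ t ∈ Finset.Icc 1 T,
          z t * (∑ s ∈ Finset.Icc 1 t, z s / hh (s + 1)) ^ ((1 - ε) / ε))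
        + 2 * Z * β 1 ^ (1 - ε) := le_trans hptz hchargez
  have hB : ∑ t ∈ Finset.Icc 1 T, w t * β t ^ (-2 : ℝ)
      ≤ 2 * (∑ t ∈ Finset.Icc 1 T,
          w t * (∑ s ∈ Finset.Icc 1 t, w s / hh (s + 1)) ^ (-(2 : ℝ) / 3))
        + 2 * W * β 1 ^ (-2 : ℝ) := le_trans hptw hchargew
  -- step 1: bounding the h-part
  have hreindex : ∀ g : ℕ → ℝ,
      ∑ t ∈ Finset.Icc 2 T, g (t - 1) = ∑ t ∈ Finset.Icc 1 (T - 1), g t := by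
    intro g
    have himg : Finset.Icc 2 T
        = Finset.map ⟨fun n => n + 1, add_left_injective 1⟩ (Finset.Icc 1 (T - 1)) := by
      ext x
      simp only [Finset.mem_map, Finset.mem_Icc, Function.Embedding.coeFn_mk]
      constructor
      · intro hx; exact ⟨x - 1, ⟨by omega, by omega⟩, by omega⟩
      · rintro ⟨a, ⟨ha1, ha2⟩, rfl⟩; omega
    rw [himg, Finset.sum_map]
    simp
  have hsplit1 : ∀ f : ℕ → ℝ,
      ∑ t ∈ Finset.Icc 1 T, f t = f 1 + ∑ t ∈ Finset.Icc 2 T, f t := by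
    intro f
    have hins : Finset.Icc 1 T = insert 1 (Finset.Icc 2 T) := by
      ext x
      simp only [Finset.mem_Icc, Finset.mem_insert]
      omega
    rw [hins, Finset.sum_insert (by simp)]
  have hbound : ∑ t ∈ Finset.Icc 2 T, (β t - β (t - 1)) * h t
      ≤ ∑ t ∈ Finset.Icc 2 T,
          (z (t - 1) * β (t - 1) ^ (1 - ε) + w (t - 1) * β (t - 1) ^ (-2 : ℝ)) := by
    apply Finset.sum_le_sum
    intro t ht
    obtain ⟨h2t, htT⟩ := Finset.mem_Icc.mp ht
    have hht := hhh t (Finset.mem_Icc.mpr ⟨h2t, by omega⟩)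
    have hβt1 : 0 < β (t - 1) := hβpos (t - 1) (by omega) (by omega)
    have hzt := hz (t - 1) (Finset.mem_Icc.mpr ⟨by omega, by omega⟩)
    have hwt := hw (t - 1) (Finset.mem_Icc.mpr ⟨by omega, by omega⟩)
    have e1 := Real.rpow_pos_of_pos hβt1 (1 - ε)
    have e2 := Real.rpow_pos_of_pos hβt1 (-2 : ℝ)
    have hg : 0 < z (t - 1) * β (t - 1) ^ (1 - ε) + w (t - 1) * β (t - 1) ^ (-2 : ℝ) := by
      nlinarith
    have hinc : β t - β (t - 1)
        = (z (t - 1) * β (t - 1) ^ (1 - ε) + w (t - 1) * β (t - 1) ^ (-2 : ℝ)) / hh t := by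
      rw [hβrec t ht]; ring
    have hincnn : 0 ≤ β t - β (t - 1) := by
      rw [hinc]; exact (div_pos hg hht).le
    calc (β t - β (t - 1)) * h t ≤ (β t - β (t - 1)) * hh t :=
          mul_le_mul_of_nonneg_left (hhle t ht) hincnn
      _ = z (t - 1) * β (t - 1) ^ (1 - ε) + w (t - 1) * β (t - 1) ^ (-2 : ℝ) := by
          rw [hinc, div_mul_cancel₀ _ (ne_of_gt hht)]
  have hre := hreindex (fun s => z s * β s ^ (1 - ε) + w s * β s ^ (-2 : ℝ))
  have hstep1 : ∑ t ∈ Finset.Icc 1 T, (β t - β (t - 1)) * h t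
      ≤ β 1 * h 1 + ∑ t ∈ Finset.Icc 1 (T - 1),
          (z t * β t ^ (1 - ε) + w t * β t ^ (-2 : ℝ)) := by
    rw [hsplit1 (fun t => (β t - β (t - 1)) * h t)]
    simp only [show (1 : ℕ) - 1 = 0 from rfl, hβ0, sub_zero]
    rw [hre] at hbound
    linarith
  have hsubset : ∑ t ∈ Finset.Icc 1 (T - 1), (z t * β t ^ (1 - ε) + w t * β t ^ (-2 : ℝ))
      ≤ ∑ t ∈ Finset.Icc 1 T, (z t * β t ^ (1 - ε) + w t * β t ^ (-2 : ℝ)) := by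
    apply Finset.sum_le_sum_of_subset_of_nonneg
    · exact Finset.Icc_subset_Icc_right (by omega)
    · intro i hi _
      obtain ⟨h1, h2⟩ := Finset.mem_Icc.mp hi
      have hβi := hβpos i h1 h2
      have e1 := Real.rpow_pos_of_pos hβi (1 - ε)
      have e2 := Real.rpow_pos_of_pos hβi (-2 : ℝ)
      nlinarith [hz i hi, hw i hi]
  have hABsplit : ∑ t ∈ Finset.Icc 1 T, (z t * β t ^ (1 - ε) + w t * β t ^ (-2 : ℝ))
      = (∑ t ∈ Finset.Icc 1 T, z t * β t ^ (1 - ε))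
        + ∑ t ∈ Finset.Icc 1 T, w t * β t ^ (-2 : ℝ) := Finset.sum_add_distrib
  have hLHS : ∑ t ∈ Finset.Icc 1 T,
        ((β t - β (t - 1)) * h t + z t * β t ^ (1 - ε) + w t * β t ^ (-2 : ℝ))
      = ((∑ t ∈ Finset.Icc 1 T, (β t - β (t - 1)) * h t)
          + ∑ t ∈ Finset.Icc 1 T, z t * β t ^ (1 - ε))
        + ∑ t ∈ Finset.Icc 1 T, w t * β t ^ (-2 : ℝ) := by
    rw [Finset.sum_add_distrib, Finset.sum_add_distrib]
  have hnn1 : 0 ≤ Z * β 1 ^ (1 - ε) :=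
    mul_nonneg hZ0.le (Real.rpow_pos_of_pos hβ1 _).le
  have hnn2 : 0 ≤ W * β 1 ^ (-2 : ℝ) :=
    mul_nonneg hW0.le (Real.rpow_pos_of_pos hβ1 _).le
  rw [hLHS]
  linarith
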